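/- Let n ≥ 1 and 0 ≤ m ≤ n be integers, τ > 0 a real number, and a₀,…,a_{n−1}, b₀,…,b_m real coefficients such that not all b_k are zero. Then every complex root s₀ of the quasipolynomial Δ(s) = s^n + Σ_{k=0}^{n−1} a_k s^k + e^{−sτ} Σ_{k=0}^{m} b_k s^k has multiplicity at most n + m + 1; that is, it is impossible that Δ^{(k)}(s₀) = 0 for all 0 ≤ k ≤ n + m + 1. -/

import Mathlib

open Polynomial

noncomputable def Lop (c : ℂ) (p : ℂ[X]) : ℂ[X] := derivative p - C c * p

lemma Lop_ne_zero {c : ℂ} (hc : c ≠ 0) {p : ℂ[X]} (hp : p ≠ 0) : Lop c p ≠ 0 := by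
  intro h
  have hco : (Lop c p).coeff p.natDegree = -(c * p.leadingCoeff) := by
    rw [Lop, coeff_sub, coeff_derivative, coeff_natDegree_succ_eq_zero, coeff_C_mul,
      leadingCoeff]
    ring
  rw [h] at hco
  simp only [coeff_zero] at hco
  have hlc : c * p.leadingCoeff = 0 := neg_eq_zero.mp hco.symm
  exact hp (leadingCoeff_eq_zero.mp ((mul_eq_zero.mp hlc).resolve_left hc))

lemma Lop_natDegree_le (c : ℂ) (p : ℂ[X]) : (Lop c p).natDegree ≤ p.natDegree :=
  le_trans (natDegree_sub_le _ _)
    (max_le (le_trans (natDegree_derivative_le p) (Nat.sub_le _ _)) (natDegree_C_mul_le c p))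

lemma iter_derivative_add (k : ℕ) (p q : ℂ[X]) :
    derivative^[k] (p + q) = derivative^[k] p + derivative^[k] q := by
  induction k generalizing p q with
  | zero => simp
  | succ k ih => simp [Function.iterate_succ_apply, derivative_add, ih]

/-- If all iterates of `Lop c` applied to `R` vanish at `s₀` (up to order `m ≥ natDegree R`),
then all iterated derivatives do too. -/
lemma eval_iter_derivative_eq_zero {c s₀ : ℂ} {R : ℂ[X]} {m : ℕ}
    (h : ∀ i ≤ m, eval s₀ ((Lop c)^[i] R) = 0) :
    ∀ j i, i + j ≤ m → eval s₀ (derivative^[j] ((Lop c)^[i] R)) = 0 := by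
  intro j
  induction j with
  | zero => intro i hi; simpa using h i (by omega)
  | succ j ih =>
      intro i hi
      have hd : derivative ((Lop c)^[i] R) = (Lop c)^[i+1] R + C c * (Lop c)^[i] R := by
        rw [Function.iterate_succ_apply']
        simp [Lop]
      rw [Function.iterate_succ_apply, hd, iter_derivative_add, iterate_derivative_C_mul,
        eval_add, eval_mul, eval_C, ih (i+1) (by omega), ih i (by omega)]
      ring

lemma poly_eq_zero_of_derivs {s₀ : ℂ} {R : ℂ[X]} {m : ℕ} (hdeg : R.natDegree ≤ m)
    (h : ∀ j ≤ m, eval s₀ (derivative^[j] R) = 0) : R = 0 := by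
  have ht : taylor s₀ R = 0 := by
    ext k
    rcases le_or_gt k m with hk | hk
    · rw [taylor_coeff, coeff_zero]
      have h3 := congrFun (factorial_smul_hasseDeriv (R := ℂ) k) R
      simp only [LinearMap.smul_apply] at h3
      have h4 : eval s₀ ((Nat.factorial k) • (hasseDeriv k R)) = 0 := by
        rw [h3]; exact h k hk
      rw [nsmul_eq_mul, eval_mul, eval_natCast] at h4
      have hfac : ((Nat.factorial k : ℕ) : ℂ) ≠ 0 :=
        Nat.cast_ne_zero.mpr (Nat.factorial_ne_zero k)
      exact (mul_eq_zero.mp h4).resolve_left hfac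
    · rw [coeff_zero]
      exact coeff_eq_zero_of_natDegree_lt (by rw [natDegree_taylor]; omega)
  exact taylor_injective s₀ (by simpa using ht)

lemma key_deriv_formula (P Q : ℂ[X]) (τ : ℝ) (k : ℕ) :
    iteratedDeriv k (fun s : ℂ => eval s P + Complex.exp (-s * τ) * eval s Q)
    = fun s => eval s (derivative^[k] P) +
        Complex.exp (-s * τ) * eval s ((Lop (τ : ℂ))^[k] Q) := by
  induction k generalizing P Q with
  | zero => simp
  | succ k ih =>
      rw [iteratedDeriv_succ, ih]
      funext s
      have hexp : HasDerivAt (fun s : ℂ => Complex.exp (-s * τ))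
          (Complex.exp (-s * τ) * (-1 * τ)) s := by
        exact (((hasDerivAt_id s).neg).mul_const (τ : ℂ)).cexp
      have hP : HasDerivAt (fun s : ℂ => eval s (derivative^[k] P))
          (eval s (derivative (derivative^[k] P))) s := (derivative^[k] P).hasDerivAt s
      have hQ : HasDerivAt (fun s : ℂ => eval s ((Lop (τ:ℂ))^[k] Q))
          (eval s (derivative ((Lop (τ:ℂ))^[k] Q))) s := ((Lop (τ:ℂ))^[k] Q).hasDerivAt s
      have := (hP.add (hexp.mul hQ)).deriv
      rw [show deriv (fun s : ℂ => eval s (derivative^[k] P) +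
          Complex.exp (-s * τ) * eval s ((Lop (τ:ℂ))^[k] Q)) s = _ from this]
      rw [← Function.iterate_succ_apply' derivative, Function.iterate_succ_apply' (Lop (τ:ℂ))]
      simp only [Lop, eval_sub, eval_mul, eval_C]
      ring


/-- Any complex root of the quasipolynomial
`Δ(s) = s^n + Σ_{k<n} a_k s^k + e^{-sτ} Σ_{k≤m} b_k s^k` (with not all `b_k`
zero) has multiplicity at most `n + m + 1`: it is impossible that all
derivatives of order `0, …, n + m + 1` vanish at the root. -/
theorem quasipolynomial_multiplicity_le (n m : ℕ) (hn : 1 ≤ n) (hm : m ≤ n)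
    (τ : ℝ) (hτ : 0 < τ) (a : Fin n → ℝ) (b : Fin (m + 1) → ℝ)
    (hb : ∃ k, b k ≠ 0) (s₀ : ℂ) :
    ¬ (∀ k ≤ n + m + 1,
        iteratedDeriv k
          (fun s : ℂ => s ^ n + (∑ k : Fin n, (a k : ℂ) * s ^ (k : ℕ)) +
            Complex.exp (-s * τ) * ∑ k : Fin (m + 1), (b k : ℂ) * s ^ (k : ℕ))
          s₀ = 0) := by
  intro h
  set P : ℂ[X] := X ^ n + ∑ k : Fin n, C (a k : ℂ) * X ^ (k : ℕ) with hP
  set Q : ℂ[X] := ∑ k : Fin (m+1), C (b k : ℂ) * X ^ (k : ℕ) with hQ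
  have hF : (fun s : ℂ => s ^ n + (∑ k : Fin n, (a k : ℂ) * s ^ (k : ℕ)) +
      Complex.exp (-s * τ) * ∑ k : Fin (m + 1), (b k : ℂ) * s ^ (k : ℕ))
      = fun s : ℂ => eval s P + Complex.exp (-s * τ) * eval s Q := by
    funext s
    simp [hP, hQ, eval_finset_sum]
  rw [hF] at h
  have hc : (τ : ℂ) ≠ 0 := by exact_mod_cast hτ.ne'
  -- Q ≠ 0
  obtain ⟨k₀, hk₀⟩ := hb
  have hQne : Q ≠ 0 := by
    intro h0
    apply hk₀
    have : Q.coeff (k₀ : ℕ) = (b k₀ : ℂ) := by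
      rw [hQ, finset_sum_coeff]
      rw [Finset.sum_eq_single k₀]
      · simp
      · intro j _ hj
        have : (k₀ : ℕ) ≠ (j : ℕ) := fun hh => hj (Fin.ext hh).symm
        simp [coeff_C_mul, coeff_X_pow, this]
      · simp
    rw [h0, coeff_zero] at this
    exact_mod_cast this.symm
  have hQdeg : Q.natDegree ≤ m := by
    apply natDegree_sum_le_of_forall_le
    intro j _
    exact le_trans (natDegree_C_mul_le _ _) (by simp [Fin.is_le j, Nat.lt_succ_iff.mp j.isLt])
  have hPdeg : P.natDegree ≤ n := by
    apply le_trans (natDegree_add_le _ _)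
    apply max_le (by simp)
    apply natDegree_sum_le_of_forall_le
    intro j _
    exact le_trans (natDegree_C_mul_le _ _) (by simp [le_of_lt j.isLt])
  -- iterates of Lop applied to R vanish at s₀
  set R : ℂ[X] := (Lop (τ:ℂ))^[n+1] Q with hR
  have hRdegle : ∀ i, ((Lop (τ:ℂ))^[i] Q).natDegree ≤ m := by
    intro i
    induction i with
    | zero => simpa using hQdeg
    | succ i ih => rw [Function.iterate_succ_apply']; exact le_trans (Lop_natDegree_le _ _) ih
  have hRne : ∀ i, (Lop (τ:ℂ))^[i] Q ≠ 0 := by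
    intro i
    induction i with
    | zero => simpa using hQne
    | succ i ih => rw [Function.iterate_succ_apply']; exact Lop_ne_zero hc ih
  have hLval : ∀ i ≤ m, eval s₀ ((Lop (τ:ℂ))^[i] R) = 0 := by
    intro i hi
    have hk : n + 1 + i ≤ n + m + 1 := by omega
    have := h (n + 1 + i) hk
    rw [key_deriv_formula] at this
    have hPzero : derivative^[n+1+i] P = 0 :=
      iterate_derivative_eq_zero (by omega)
    simp only [hPzero, eval_zero, zero_add] at this
    have hexp : Complex.exp (-s₀ * τ) ≠ 0 := Complex.exp_ne_zero _
    have heval : eval s₀ ((Lop (τ:ℂ))^[n+1+i] Q) = 0 := by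
      rcases mul_eq_zero.mp this with h' | h'
      · exact absurd h' hexp
      · exact h'
    rw [hR, ← Function.iterate_add_apply]
    rwa [show i + (n+1) = n+1+i by omega]
  have hder : ∀ j ≤ m, eval s₀ (derivative^[j] R) = 0 := by
    intro j hj
    have := eval_iter_derivative_eq_zero hLval j 0 (by omega)
    simpa using this
  exact hRne (n+1) (poly_eq_zero_of_derivs (hRdegle (n+1)) hder)
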